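/- arXiv:2502.09892 — 5 statements merged into one kernel-verified Lean document; each statement's English description precedes it below -/
import Mathlib

section
/- Let K be a number field, let d ∈ O_K \ {0} be 5-th power free, let p be a rational prime, and let (a, b, c) ∈ O_K³ be a nontrivial primitive solution of the equation a⁵ + b⁵ = d·c^p. Then a, b, c are pairwise coprime, i.e., the ideals (a)+(b), (b)+(c), and (a)+(c) all equal O_K. -/
open IsDedekindDomain NumberField

-- The additive `P`-adic valuation on a number field `F`, normalized so that a uniformizer
-- has valuation `1`; by convention `vP P 0 = 0`.
open scoped Classical in
noncomputable def vP {F : Type*} [Field F] [NumberField F]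
    (P : HeightOneSpectrum (𝓞 F)) (x : F) : ℤ :=
  if hx : x = 0 then 0
  else - Multiplicative.toAdd (WithZero.unzero ((Valuation.ne_zero_iff (P.valuation F)).mpr hx))

-- A number field is totally real if all its infinite places are real.
def TotallyReal (F : Type*) [Field F] [NumberField F] : Prop :=
  ∀ v : NumberField.InfinitePlace F, v.IsReal


/-- Remark 2.6 of the paper: for a 5-th power free `d`, the entries of a
nontrivial primitive solution of `a⁵ + b⁵ = d·c^p` are pairwise coprime. -/
theorem pairwise_coprime_of_primitive
    (K : Type*) [Field K] [NumberField K]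
    (d : 𝓞 K) (hd0 : d ≠ 0)
    -- `d` is 5-th power free
    (hd5 : ∀ q : HeightOneSpectrum (𝓞 K), ¬ q.asIdeal ^ 5 ∣ Ideal.span {d})
    (p : ℕ) (hp : p.Prime)
    (a b c : 𝓞 K)
    (heq : a ^ 5 + b ^ 5 = d * c ^ p)
    (hnt : a * b * c ≠ 0)
    (hprim : Ideal.span {a, b, c} = ⊤) :
    Ideal.span {a, b} = ⊤ ∧ Ideal.span {b, c} = ⊤ ∧ Ideal.span {a, c} = ⊤ := by
  have ha0 : a ≠ 0 := fun h => hnt (by simp [h])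
  -- helper : if a maximal ideal contains a, b and c, contradiction with primitivity
  have key : ∀ q : Ideal (𝓞 K), q.IsMaximal → a ∈ q → b ∈ q → c ∈ q → False := by
    intro q hq haq hbq hcq
    have : Ideal.span ({a, b, c} : Set (𝓞 K)) ≤ q := by
      rw [Ideal.span_le]
      intro x hx
      simp only [Set.mem_insert_iff, Set.mem_singleton_iff] at hx
      rcases hx with rfl | rfl | rfl <;> assumption
    rw [hprim, top_le_iff] at this
    exact hq.ne_top this
  refine ⟨?_, ?_, ?_⟩
  · -- span {a, b} = ⊤
    by_contra h
    obtain ⟨q, hqmax, hle⟩ := Ideal.exists_le_maximal _ h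
    have haq : a ∈ q := hle (Ideal.subset_span (by simp))
    have hbq : b ∈ q := hle (Ideal.subset_span (by simp))
    -- show c ∈ q; otherwise q^5 divides span d
    have hcq : c ∈ q := by
      by_contra hcq
      have hne : q ≠ ⊥ := by
        intro hbot
        rw [hbot] at haq
        exact ha0 (Ideal.mem_bot.mp haq)
      have hqprime : Prime q := Ideal.prime_of_isPrime hne hqmax.isPrime
      have hmem : d * c ^ p ∈ q ^ 5 := by
        rw [← heq]
        exact add_mem (Ideal.pow_mem_pow haq 5) (Ideal.pow_mem_pow hbq 5)
      have hdvd : q ^ 5 ∣ Ideal.span {d} * Ideal.span ({c} : Set (𝓞 K)) ^ p := by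
        rw [Ideal.dvd_iff_le, Ideal.span_singleton_pow,
          Ideal.span_singleton_mul_span_singleton, Ideal.span_singleton_le_iff_mem]
        exact hmem
      have hnc : ¬ q ∣ Ideal.span ({c} : Set (𝓞 K)) ^ p := by
        intro hdvd'
        have := hqprime.dvd_of_dvd_pow hdvd'
        rw [Ideal.dvd_iff_le, Ideal.span_singleton_le_iff_mem] at this
        exact hcq this
      have : q ^ 5 ∣ Ideal.span {d} :=
        hqprime.pow_dvd_of_dvd_mul_right 5 hnc hdvd
      exact hd5 ⟨q, hqmax.isPrime, hne⟩ this
    exact key q hqmax haq hbq hcq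
  · -- span {b, c} = ⊤
    by_contra h
    obtain ⟨q, hqmax, hle⟩ := Ideal.exists_le_maximal _ h
    have hbq : b ∈ q := hle (Ideal.subset_span (by simp))
    have hcq : c ∈ q := hle (Ideal.subset_span (by simp))
    have hmem : a ^ 5 ∈ q := by
      have : a ^ 5 = d * c ^ p - b ^ 5 := by linear_combination heq
      rw [this]
      exact sub_mem (Ideal.mul_mem_left _ _ (Ideal.pow_mem_of_mem _ hcq p hp.pos))
        (Ideal.pow_mem_of_mem _ hbq 5 (by norm_num))
    have haq : a ∈ q := hqmax.isPrime.mem_of_pow_mem 5 hmem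
    exact key q hqmax haq hbq hcq
  · -- span {a, c} = ⊤
    by_contra h
    obtain ⟨q, hqmax, hle⟩ := Ideal.exists_le_maximal _ h
    have haq : a ∈ q := hle (Ideal.subset_span (by simp))
    have hcq : c ∈ q := hle (Ideal.subset_span (by simp))
    have hmem : b ^ 5 ∈ q := by
      have : b ^ 5 = d * c ^ p - a ^ 5 := by linear_combination heq
      rw [this]
      exact sub_mem (Ideal.mul_mem_left _ _ (Ideal.pow_mem_of_mem _ hcq p hp.pos))
        (Ideal.pow_mem_of_mem _ haq 5 (by norm_num))
    have hbq : b ∈ q := hqmax.isPrime.mem_of_pow_mem 5 hmem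
    exact key q hqmax haq hbq hcq
end

section
/- Let K be a totally real number field, r ≥ 5 and p ≥ 5 rational primes, d ∈ O_K \ {0}, and let L = K(ζ_r) where ζ_r is a primitive r-th root of unity. Let (a, b, c) ∈ O_L³ be a nontrivial primitive solution of a^r + b^r = d·c^p. Then for any 0 ≤ i < j ≤ r − 1, every prime ideal q of O_L dividing both a + ζ_r^i·b and a + ζ_r^j·b satisfies q | r·d; equivalently, a + ζ_r^i·b and a + ζ_r^j·b are coprime outside S_{L,rd}. -/
open IsDedekindDomain NumberField

/-- Lemma 3.3 of the paper. -/
theorem coprime_outside_S_L_rd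
    (K : Type*) [Field K] [NumberField K] (hK : TotallyReal K)
    (r : ℕ) (hr : r.Prime) (hr5 : 5 ≤ r)
    (p : ℕ) (hp : p.Prime) (hp5 : 5 ≤ p)
    (d : 𝓞 K) (hd0 : d ≠ 0)
    -- `L = K(ζ_r)` where `ζ` is a primitive `r`-th root of unity
    (L : Type*) [Field L] [NumberField L] [Algebra K L]
    (ζ : L) (hζ : IsPrimitiveRoot ζ r)
    (hL : IntermediateField.adjoin K {ζ} = ⊤)
    -- `ζI` is `ζ` as an element of `𝓞 L`, `dL` is the image of `d` in `𝓞 L`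
    (ζI : 𝓞 L) (hζI : (ζI : L) = ζ)
    (dL : 𝓞 L) (hdL : (dL : L) = algebraMap K L (d : K))
    -- `(a, b, c)` is a nontrivial primitive solution of `a^r + b^r = d·c^p` in `𝓞 L`
    (a b c : 𝓞 L)
    (heq : a ^ r + b ^ r = dL * c ^ p)
    (hnt : a * b * c ≠ 0)
    (hprim : Ideal.span {a, b, c} = ⊤) :
    ∀ i j : ℕ, i < j → j ≤ r - 1 →
      ∀ q : HeightOneSpectrum (𝓞 L),
        a + ζI ^ i * b ∈ q.asIdeal → a + ζI ^ j * b ∈ q.asIdeal →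
          (r : 𝓞 L) * dL ∈ q.asIdeal := by
  intro i j hij hjr q hqi hqj
  have hinj : Function.Injective (algebraMap (𝓞 L) L) :=
    NumberField.RingOfIntegers.coe_injective
  have hζI' : IsPrimitiveRoot ζI r := by
    apply IsPrimitiveRoot.of_map_of_injective (f := algebraMap (𝓞 L) L) _ hinj
    rwa [show algebraMap (𝓞 L) L ζI = ζ from hζI]
  have hrpos : 0 < r := hr.pos
  have hdvd : ∀ k : ℕ, 1 ≤ k → k ≤ r - 1 → (ζI ^ k - 1) ∣ (r : 𝓞 L) := by
    intro k hk1 hkr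
    obtain ⟨n, hn⟩ : ∃ n, r = n + 1 := ⟨r - 1, (Nat.succ_pred_eq_of_pos hrpos).symm⟩
    have hζI'' : IsPrimitiveRoot ζI (n + 1) := hn ▸ hζI'
    have hprod := hζI''.prod_one_sub_pow_eq_order
    have hk : k - 1 < n := by omega
    have hdd : (1 - ζI ^ ((k - 1) + 1)) ∣ ∏ m ∈ Finset.range n, (1 - ζI ^ (m + 1)) :=
      Finset.dvd_prod_of_mem _ (Finset.mem_range.mpr hk)
    rw [hprod] at hdd
    have hkk : (k - 1) + 1 = k := by omega
    rw [hkk] at hdd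
    have : (ζI ^ k - 1) ∣ ((n : 𝓞 L) + 1) := by
      rw [show (ζI ^ k - 1 : 𝓞 L) = -(1 - ζI ^ k) by ring]
      exact neg_dvd.mpr hdd
    rw [hn]; exact_mod_cast this
  have hqprime : q.asIdeal.IsPrime := q.isPrime
  have hb : (ζI ^ j - ζI ^ i) * b ∈ q.asIdeal := by
    have h := Ideal.sub_mem _ hqj hqi
    convert h using 1; ring
  rcases hqprime.mem_or_mem hb with hz | hb
  · -- r ∈ q
    have hzu : IsUnit (ζI ^ i) := (hζI'.isUnit hrpos.ne').pow i
    have hfac : ζI ^ j - ζI ^ i = ζI ^ i * (ζI ^ (j - i) - 1) := by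
      rw [mul_sub, mul_one, ← pow_add]
      congr 2; omega
    rw [hfac] at hz
    have hz' : ζI ^ (j - i) - 1 ∈ q.asIdeal := by
      rcases hqprime.mem_or_mem hz with h | h
      · exact absurd (Ideal.eq_top_of_isUnit_mem _ h hzu) hqprime.ne_top
      · exact h
    have hr' : (r : 𝓞 L) ∈ q.asIdeal := by
      obtain ⟨t, ht⟩ := hdvd (j - i) (by omega) (by omega)
      rw [ht]
      exact Ideal.mul_mem_right _ _ hz'
    exact Ideal.mul_mem_right _ _ hr'
  · -- b ∈ q, hence a ∈ q, hence dL * c ^ p ∈ q; c ∉ q by primitivity, so dL ∈ q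
    have ha : a ∈ q.asIdeal := by
      have := Ideal.sub_mem _ hqi (Ideal.mul_mem_left _ (ζI ^ i) hb)
      simpa using this
    have habr : dL * c ^ p ∈ q.asIdeal := by
      rw [← heq]
      exact Ideal.add_mem _ (Ideal.pow_mem_of_mem _ ha r hrpos)
        (Ideal.pow_mem_of_mem _ hb r hrpos)
    rcases hqprime.mem_or_mem habr with hd | hc
    · exact Ideal.mul_mem_left _ _ hd
    · have hcq : c ∈ q.asIdeal := hqprime.mem_of_pow_mem _ hc
      have hle : Ideal.span {a, b, c} ≤ q.asIdeal := by
        rw [Ideal.span_le]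
        rintro x hx
        simp only [Set.mem_insert_iff, Set.mem_singleton_iff] at hx
        rcases hx with rfl | rfl | rfl
        · exact ha
        · exact hb
        · exact hcq
      rw [hprim] at hle
      exact absurd (top_le_iff.mp hle) hqprime.ne_top
end

section
/- Let K be a totally real number field, r ≥ 5 and p ≥ 5 rational primes, d ∈ O_K \ {0}, and K⁺ = K(ζ_r + ζ_r⁻¹). Let (a, b, c) ∈ O_{K⁺}³ be a nontrivial primitive solution of a^r + b^r = d·c^p. Fix integers 0 ≤ k₁ < k₂ < k₃ ≤ (r−1)/2 and set A = α·f_{k₁}(a, b), B = β·f_{k₂}(a, b), C = γ·f_{k₃}(a, b), where α = ζ_r^{k₃} + ζ_r^{−k₃} − ζ_r^{k₂} − ζ_r^{−k₂}, β = ζ_r^{k₁} + ζ_r^{−k₁} − ζ_r^{k₃} − ζ_r^{−k₃}, γ = ζ_r^{k₂} + ζ_r^{−k₂} − ζ_r^{k₁} − ζ_r^{−k₁}. Then A, B, C are pairwise coprime outside S_{K⁺,rd}: no prime ideal q of O_{K⁺} with q ∤ r·d divides two of A, B, C. -/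
open IsDedekindDomain NumberField

set_option maxHeartbeats 1000000 in
set_option synthInstance.maxHeartbeats 400000 in
/-- Corollary 3.5 of the paper. -/
theorem ABC_pairwise_coprime_outside_S
    (K : Type*) [Field K] [NumberField K] (hK : TotallyReal K)
    (r : ℕ) (hr : r.Prime) (hr5 : 5 ≤ r)
    (p : ℕ) (hp : p.Prime) (hp5 : 5 ≤ p)
    (d : 𝓞 K) (hd0 : d ≠ 0)
    -- `L = K(ζ_r)` where `ζ` is a primitive `r`-th root of unity
    (L : Type*) [Field L] [NumberField L] [Algebra K L]
    (ζ : L) (hζ : IsPrimitiveRoot ζ r)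
    (hL : IntermediateField.adjoin K {ζ} = ⊤)
    -- `K⁺ = K(ζ_r + ζ_r⁻¹)`
    (Kp : IntermediateField K L)
    (hKp : Kp = IntermediateField.adjoin K {ζ + ζ⁻¹})
    -- `dp` is the image of `d` in `𝓞 K⁺`, and `e k` is `ζ^k + ζ^{−k}` as an element of `𝓞 K⁺`
    (dp : 𝓞 Kp) (hdp : ((dp : Kp) : L) = algebraMap K L (d : K))
    (e : ℕ → 𝓞 Kp) (he : ∀ k : ℕ, ((e k : Kp) : L) = ζ ^ k + ζ⁻¹ ^ k)
    -- `(a, b, c)` is a nontrivial primitive solution of `a^r + b^r = d·c^p` in `𝓞 K⁺`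
    (a b c : 𝓞 Kp)
    (heq : a ^ r + b ^ r = dp * c ^ p)
    (hnt : a * b * c ≠ 0)
    (hprim : Ideal.span {a, b, c} = ⊤)
    -- `0 ≤ k₁ < k₂ < k₃ ≤ (r−1)/2`
    (k₁ k₂ k₃ : ℕ) (h12 : k₁ < k₂) (h23 : k₂ < k₃) (h3 : k₃ ≤ (r - 1) / 2)
    -- `A = α·f_{k₁}(a,b)`, `B = β·f_{k₂}(a,b)`, `C = γ·f_{k₃}(a,b)`
    (A B C : 𝓞 Kp)
    (hA : A = (e k₃ - e k₂) * (a ^ 2 + e k₁ * a * b + b ^ 2))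
    (hB : B = (e k₁ - e k₃) * (a ^ 2 + e k₂ * a * b + b ^ 2))
    (hC : C = (e k₂ - e k₁) * (a ^ 2 + e k₃ * a * b + b ^ 2)) :
    ∀ q : HeightOneSpectrum (𝓞 Kp), (r : 𝓞 Kp) * dp ∉ q.asIdeal →
      ¬ (A ∈ q.asIdeal ∧ B ∈ q.asIdeal) ∧
      ¬ (B ∈ q.asIdeal ∧ C ∈ q.asIdeal) ∧
      ¬ (A ∈ q.asIdeal ∧ C ∈ q.asIdeal) := by
  intro q hq
  haveI := Fact.mk hr
  have hqp : q.asIdeal.IsPrime := q.isPrime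
  have hrq : (r : 𝓞 Kp) ∉ q.asIdeal := fun h => hq (Ideal.mul_mem_right _ _ h)
  have hdq : dp ∉ q.asIdeal := fun h => hq (Ideal.mul_mem_left _ _ h)
  have hζ0 : ζ ≠ 0 := hζ.ne_zero (by omega)
  have hint : IsIntegral ℤ ζ := hζ.isIntegral (by omega)
  let ζO : 𝓞 L := ⟨ζ, hint⟩
  have hcoeζ : algebraMap (𝓞 L) L ζO = ζ := rfl
  have hζOpr : IsPrimitiveRoot ζO r :=
    IsPrimitiveRoot.of_map_of_injective (by rwa [hcoeζ]) RingOfIntegers.coe_injective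
  -- divisibility of r by 1 - ζ^m in the ring of integers of L
  have hdvd : ∀ m : ℕ, 0 < m → m < r →
      ∃ w : 𝓞 L, (1 - ζ ^ m) * algebraMap (𝓞 L) L w = (r : L) := by
    intro m hm0 hmr
    have hcop : m.Coprime r :=
      Nat.coprime_comm.mp (hr.coprime_iff_not_dvd.mpr
        (fun hd => absurd (Nat.le_of_dvd hm0 hd) (by omega)))
    have hprm : IsPrimitiveRoot (ζO ^ m) r := hζOpr.pow_of_coprime m hcop
    have hroot : Polynomial.IsRoot (Polynomial.cyclotomic r (𝓞 L)) (ζO ^ m) :=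
      hprm.isRoot_cyclotomic (by omega)
    have h := Polynomial.sub_dvd_eval_sub 1 (ζO ^ m) (Polynomial.cyclotomic r (𝓞 L))
    rw [hroot.eq_zero, Polynomial.eval_one_cyclotomic_prime, sub_zero] at h
    obtain ⟨w, hw⟩ := h
    refine ⟨w, ?_⟩
    have := congrArg (algebraMap (𝓞 L) L) hw.symm
    simpa [map_mul, map_sub, map_pow, hcoeζ] using this
  -- the key lemma: e j - e i is not in q for 0 ≤ i < j ≤ (r-1)/2
  have key : ∀ i j : ℕ, i < j → j ≤ (r - 1) / 2 → e j - e i ∉ q.asIdeal := by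
    intro i j hij hj2 hmem
    obtain ⟨w₁, hw₁⟩ := hdvd (j - i) (by omega) (by omega)
    obtain ⟨w₂, hw₂⟩ := hdvd (i + j) (by omega) (by omega)
    -- the factorization identity in L
    have hfact : ζ ^ j + ζ⁻¹ ^ j - (ζ ^ i + ζ⁻¹ ^ i)
        = ζ⁻¹ ^ j * ((1 - ζ ^ (j - i)) * (1 - ζ ^ (i + j))) := by
      have huv : ζ ^ j = ζ ^ i * ζ ^ (j - i) := by rw [← pow_add]; congr 1; omega
      have hw : ζ ^ (i + j) = ζ ^ i * ζ ^ i * ζ ^ (j - i) := by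
        rw [← pow_add, ← pow_add]; congr 1; omega
      have hju : ζ⁻¹ ^ j = (ζ ^ i * ζ ^ (j - i))⁻¹ := by rw [inv_pow, huv]
      have hiu : ζ⁻¹ ^ i = (ζ ^ i)⁻¹ := by rw [inv_pow]
      have hu0 : ζ ^ i ≠ 0 := pow_ne_zero _ hζ0
      have hv0 : ζ ^ (j - i) ≠ 0 := pow_ne_zero _ hζ0
      rw [huv, hw, hju, hiu]
      field_simp
      ring
    have hEL : algebraMap Kp L (algebraMap (𝓞 Kp) Kp (e j - e i))
        = ζ⁻¹ ^ j * ((1 - ζ ^ (j - i)) * (1 - ζ ^ (i + j))) := by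
      rw [map_sub, map_sub]
      show ((e j : Kp) : L) - ((e i : Kp) : L) = _
      rw [he, he, hfact]
    have hELne : algebraMap Kp L (algebraMap (𝓞 Kp) Kp (e j - e i)) ≠ 0 := by
      rw [hEL]
      refine mul_ne_zero (pow_ne_zero _ (inv_ne_zero hζ0))
        (mul_ne_zero (sub_ne_zero_of_ne ?_) (sub_ne_zero_of_ne ?_))
      · exact fun h => hζ.pow_ne_one_of_pos_of_lt (by omega : j - i ≠ 0) (by omega) h.symm
      · exact fun h => hζ.pow_ne_one_of_pos_of_lt (by omega : i + j ≠ 0) (by omega) h.symm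
    have hEne : algebraMap (𝓞 Kp) Kp (e j - e i) ≠ 0 := by
      intro h0
      exact hELne (by rw [h0]; exact map_zero (algebraMap Kp L))
    have hmain : (ζ ^ j * (algebraMap (𝓞 L) L w₁ * algebraMap (𝓞 L) L w₂))
        * algebraMap Kp L (algebraMap (𝓞 Kp) Kp (e j - e i)) = ((r : ℕ) : L) ^ 2 := by
      have hcancel : ζ ^ j * ζ⁻¹ ^ j = 1 := by
        rw [inv_pow, mul_inv_cancel₀ (pow_ne_zero _ hζ0)]
      rw [hEL]
      calc ζ ^ j * (algebraMap (𝓞 L) L w₁ * algebraMap (𝓞 L) L w₂) *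
            (ζ⁻¹ ^ j * ((1 - ζ ^ (j - i)) * (1 - ζ ^ (i + j))))
          = (ζ ^ j * ζ⁻¹ ^ j) * (((1 - ζ ^ (j - i)) * algebraMap (𝓞 L) L w₁) *
            ((1 - ζ ^ (i + j)) * algebraMap (𝓞 L) L w₂)) := by ring
        _ = ((1 - ζ ^ (j - i)) * algebraMap (𝓞 L) L w₁) *
            ((1 - ζ ^ (i + j)) * algebraMap (𝓞 L) L w₂) := by rw [hcancel, one_mul]
        _ = ((r : ℕ) : L) * ((r : ℕ) : L) := by rw [hw₁, hw₂]
        _ = ((r : ℕ) : L) ^ 2 := (pow_two _).symm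
    set y : Kp := ((r : Kp)) ^ 2 * (algebraMap (𝓞 Kp) Kp (e j - e i))⁻¹ with hy_def
    have hyL : algebraMap Kp L y
        = ζ ^ j * (algebraMap (𝓞 L) L w₁ * algebraMap (𝓞 L) L w₂) := by
      rw [hy_def, map_mul, map_pow, map_natCast, map_inv₀, eq_comm,
        eq_mul_inv_iff_mul_eq₀ hELne]
      exact hmain
    have hyint : IsIntegral ℤ y := by
      have hLint : IsIntegral ℤ (algebraMap Kp L y) := by
        rw [hyL]
        exact (hint.pow j).mul ((RingOfIntegers.isIntegral_coe w₁).mul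
          (RingOfIntegers.isIntegral_coe w₂))
      exact (isIntegral_algebraMap_iff (algebraMap Kp L).injective).mp hLint
    let z : 𝓞 Kp := ⟨y, hyint⟩
    have hz : (e j - e i) * z = (r : 𝓞 Kp) ^ 2 := by
      apply RingOfIntegers.coe_injective
      rw [map_mul, map_pow, map_natCast]
      show algebraMap (𝓞 Kp) Kp (e j - e i) * y = (r : Kp) ^ 2
      rw [hy_def, mul_comm, mul_assoc, inv_mul_cancel₀ hEne, mul_one]
    have hr2 : (r : 𝓞 Kp) ^ 2 ∈ q.asIdeal := hz ▸ Ideal.mul_mem_right _ _ hmem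
    exact hrq (hqp.mem_of_pow_mem 2 hr2)
  -- pairwise coprimality of the binary quadratic values f_i, f_j
  have keyf : ∀ i j : ℕ, i < j → j ≤ (r - 1) / 2 →
      ¬ (a ^ 2 + e i * a * b + b ^ 2 ∈ q.asIdeal ∧ a ^ 2 + e j * a * b + b ^ 2 ∈ q.asIdeal) := by
    rintro i j hij hj2 ⟨hfi, hfj⟩
    have hdiff : (e j - e i) * (a * b) ∈ q.asIdeal := by
      have h := q.asIdeal.sub_mem hfj hfi
      have : (a ^ 2 + e j * a * b + b ^ 2) - (a ^ 2 + e i * a * b + b ^ 2)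
          = (e j - e i) * (a * b) := by ring
      rwa [this] at h
    have hab : a * b ∈ q.asIdeal :=
      (hqp.mem_or_mem hdiff).resolve_left (key i j hij hj2)
    have habq : a ∈ q.asIdeal ∧ b ∈ q.asIdeal := by
      rcases hqp.mem_or_mem hab with h | h
      · refine ⟨h, ?_⟩
        have hb2 : b ^ 2 ∈ q.asIdeal := by
          have heq2 : b ^ 2 = (a ^ 2 + e i * a * b + b ^ 2) - a * (a + e i * b) := by ring
          rw [heq2]
          exact q.asIdeal.sub_mem hfi (Ideal.mul_mem_right _ _ h)
        exact hqp.mem_of_pow_mem 2 hb2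
      · refine ⟨?_, h⟩
        have ha2 : a ^ 2 ∈ q.asIdeal := by
          have heq2 : a ^ 2 = (a ^ 2 + e i * a * b + b ^ 2) - b * (b + e i * a) := by ring
          rw [heq2]
          exact q.asIdeal.sub_mem hfi (Ideal.mul_mem_right _ _ h)
        exact hqp.mem_of_pow_mem 2 ha2
    have hcq : c ∈ q.asIdeal := by
      have hsum : dp * c ^ p ∈ q.asIdeal := by
        rw [← heq]
        exact q.asIdeal.add_mem
          (Ideal.pow_mem_of_mem _ habq.1 r (by omega))
          (Ideal.pow_mem_of_mem _ habq.2 r (by omega))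
      exact hqp.mem_of_pow_mem p ((hqp.mem_or_mem hsum).resolve_left hdq)
    have hle : Ideal.span {a, b, c} ≤ q.asIdeal := by
      rw [Ideal.span_le]
      rintro x hx
      simp only [Set.mem_insert_iff, Set.mem_singleton_iff] at hx
      rcases hx with rfl | rfl | rfl
      · exact habq.1
      · exact habq.2
      · exact hcq
    rw [hprim] at hle
    exact hqp.ne_top (top_le_iff.mp hle)
  -- peel off the scalar factors
  have hfA : A ∈ q.asIdeal → a ^ 2 + e k₁ * a * b + b ^ 2 ∈ q.asIdeal := by
    intro h
    rw [hA] at h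
    exact (hqp.mem_or_mem h).resolve_left (key k₂ k₃ h23 h3)
  have hfB : B ∈ q.asIdeal → a ^ 2 + e k₂ * a * b + b ^ 2 ∈ q.asIdeal := by
    intro h
    have h' : (e k₃ - e k₁) * (a ^ 2 + e k₂ * a * b + b ^ 2) ∈ q.asIdeal := by
      have hneg : (e k₃ - e k₁) * (a ^ 2 + e k₂ * a * b + b ^ 2) = -B := by rw [hB]; ring
      rw [hneg]
      exact q.asIdeal.neg_mem h
    exact (hqp.mem_or_mem h').resolve_left (key k₁ k₃ (h12.trans h23) h3)
  have hfC : C ∈ q.asIdeal → a ^ 2 + e k₃ * a * b + b ^ 2 ∈ q.asIdeal := by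
    intro h
    rw [hC] at h
    exact (hqp.mem_or_mem h).resolve_left (key k₁ k₂ h12 (by omega))
  refine ⟨?_, ?_, ?_⟩
  · rintro ⟨hA', hB'⟩
    exact keyf k₁ k₂ h12 (by omega) ⟨hfA hA', hfB hB'⟩
  · rintro ⟨hB', hC'⟩
    exact keyf k₂ k₃ h23 h3 ⟨hfB hB', hfC hC'⟩
  · rintro ⟨hA', hC'⟩
    exact keyf k₁ k₃ (h12.trans h23) h3 ⟨hfA hA', hfC hC'⟩
end

section
/- Let K be a totally real number field, r ≥ 5 and p ≥ 5 rational primes, d ∈ O_K \ {0}, and K⁺ = K(ζ_r + ζ_r⁻¹). Let (a, b, c) ∈ O_{K⁺}³ be a nontrivial primitive solution of a^r + b^r = d·c^p, let A = α·f_{k₁}(a, b), B = β·f_{k₂}(a, b), C = γ·f_{k₃}(a, b) for fixed 0 ≤ k₁ < k₂ < k₃ ≤ (r−1)/2, and set Δ = 2⁴·(A·B·C)² and c₄ = 2⁴·(A·B + B·C + C·A). Then for every prime ideal q of O_{K⁺} with q ∤ 2·r·d: p divides v_q(Δ), and if v_q(Δ) > 0 then v_q(c₄) = 0. -/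
open IsDedekindDomain NumberField

set_option maxHeartbeats 1600000
set_option synthInstance.maxHeartbeats 400000

section vPlemmas

variable {F : Type*} [Field F] [NumberField F] (P : HeightOneSpectrum (𝓞 F))

lemma vP_zero : vP P (0 : F) = 0 := by simp [vP]

lemma vP_mul {x y : F} (hx : x ≠ 0) (hy : y ≠ 0) :
    vP P (x * y) = vP P x + vP P y := by
  classical
  rw [vP, vP, vP, dif_neg (mul_ne_zero hx hy), dif_neg hx, dif_neg hy]
  have hm : P.valuation F (x * y) = P.valuation F x * P.valuation F y := map_mul _ _ _
  rw [← neg_add, neg_inj, ← toAdd_mul]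
  congr 1
  rw [← WithZero.coe_inj, WithZero.coe_mul, WithZero.coe_unzero, WithZero.coe_unzero,
    WithZero.coe_unzero, hm]

lemma vP_one : vP P (1 : F) = 0 := by
  have := vP_mul P (x := (1:F)) (y := (1:F)) one_ne_zero one_ne_zero
  rw [mul_one] at this
  linarith

lemma vP_pow {x : F} (hx : x ≠ 0) (n : ℕ) : vP P (x ^ n) = n * vP P x := by
  induction n with
  | zero => simpa using vP_one P
  | succ n ih =>
      rw [pow_succ, vP_mul P (pow_ne_zero n hx) hx, ih]
      push_cast; ring

lemma vP_eq_zero_of_not_mem {x : 𝓞 F} (hx : x ∉ P.asIdeal) : vP P (x : F) = 0 := by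
  classical
  have hx0 : (x : F) ≠ 0 := by
    simp only [ne_eq, RingOfIntegers.coe_eq_zero_iff]
    rintro rfl; exact hx (zero_mem _)
  have h1 : P.valuation F ((x : F)) = 1 := by
    have hle := P.valuation_le_one (K := F) x
    have hnlt : ¬ P.valuation F ((algebraMap (𝓞 F) F) x) < 1 := by
      rw [P.valuation_lt_one_iff_dvd, Ideal.dvd_span_singleton]
      exact hx
    exact le_antisymm hle (not_lt.mp hnlt)
  rw [vP, dif_neg hx0, neg_eq_zero, ← toAdd_one]
  congr 1
  rw [← WithZero.coe_inj, WithZero.coe_unzero, h1, WithZero.coe_one]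

end vPlemmas

/-- Theorem 3.7 of the paper: semistability of the Frey curve away from
`S_{K⁺,2rd}`, expressed via its discriminant `Δ` and invariant `c₄`. -/
theorem frey_curve_semistable_outside_S
    (K : Type*) [Field K] [NumberField K] (hK : TotallyReal K)
    (r : ℕ) (hr : r.Prime) (hr5 : 5 ≤ r)
    (p : ℕ) (hp : p.Prime) (hp5 : 5 ≤ p)
    (d : 𝓞 K) (hd0 : d ≠ 0)
    -- `L = K(ζ_r)` where `ζ` is a primitive `r`-th root of unity
    (L : Type*) [Field L] [NumberField L] [Algebra K L]
    (ζ : L) (hζ : IsPrimitiveRoot ζ r)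
    (hL : IntermediateField.adjoin K {ζ} = ⊤)
    -- `K⁺ = K(ζ_r + ζ_r⁻¹)`
    (Kp : IntermediateField K L)
    (hKp : Kp = IntermediateField.adjoin K {ζ + ζ⁻¹})
    -- `dp` is the image of `d` in `𝓞 K⁺`, and `e k` is `ζ^k + ζ^{−k}` as an element of `𝓞 K⁺`
    (dp : 𝓞 Kp) (hdp : ((dp : Kp) : L) = algebraMap K L (d : K))
    (e : ℕ → 𝓞 Kp) (he : ∀ k : ℕ, ((e k : Kp) : L) = ζ ^ k + ζ⁻¹ ^ k)
    -- `(a, b, c)` is a nontrivial primitive solution of `a^r + b^r = d·c^p` in `𝓞 K⁺`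
    (a b c : 𝓞 Kp)
    (heq : a ^ r + b ^ r = dp * c ^ p)
    (hnt : a * b * c ≠ 0)
    (hprim : Ideal.span {a, b, c} = ⊤)
    -- `0 ≤ k₁ < k₂ < k₃ ≤ (r−1)/2`
    (k₁ k₂ k₃ : ℕ) (h12 : k₁ < k₂) (h23 : k₂ < k₃) (h3 : k₃ ≤ (r - 1) / 2)
    -- `A = α·f_{k₁}(a,b)`, `B = β·f_{k₂}(a,b)`, `C = γ·f_{k₃}(a,b)`
    (A B C : 𝓞 Kp)
    (hA : A = (e k₃ - e k₂) * (a ^ 2 + e k₁ * a * b + b ^ 2))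
    (hB : B = (e k₁ - e k₃) * (a ^ 2 + e k₂ * a * b + b ^ 2))
    (hC : C = (e k₂ - e k₁) * (a ^ 2 + e k₃ * a * b + b ^ 2))
    -- `Δ` and `c₄` of the Frey curve `Y² = X(X − A)(X + B)`
    (Δ c₄ : 𝓞 Kp)
    (hΔ : Δ = 2 ^ 4 * (A * B * C) ^ 2)
    (hc₄ : c₄ = 2 ^ 4 * (A * B + B * C + C * A)) :
    ∀ q : HeightOneSpectrum (𝓞 Kp), 2 * (r : 𝓞 Kp) * dp ∉ q.asIdeal →
      (p : ℤ) ∣ vP q (Δ : Kp) ∧ (0 < vP q (Δ : Kp) → vP q (c₄ : Kp) = 0) := by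
  classical
  intro q hq
  -- notation
  set m : ℕ := (r - 1) / 2 with hm
  have hodd : Odd r := hr.odd_of_ne_two (by omega)
  have hrm : r = 2 * m + 1 := by
    rcases hodd with ⟨t, ht⟩; omega
  have hm2 : 2 ≤ m := by omega
  have hqp : q.asIdeal.IsPrime := q.isPrime
  have hq2 : (2 : 𝓞 Kp) ∉ q.asIdeal := fun h => hq (by
    have : (2 : 𝓞 Kp) * ((r : 𝓞 Kp) * dp) ∈ q.asIdeal := Ideal.mul_mem_right _ _ h
    rwa [← mul_assoc] at this)
  have hqr : ((r : ℕ) : 𝓞 Kp) ∉ q.asIdeal := fun h => hq (by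
    have : ((r : 𝓞 Kp)) * (2 * dp) ∈ q.asIdeal := Ideal.mul_mem_right _ _ h
    have h2 : 2 * (r : 𝓞 Kp) * dp = ((r : 𝓞 Kp)) * (2 * dp) := by ring
    rwa [h2])
  have hqd : dp ∉ q.asIdeal := fun h => hq (Ideal.mul_mem_left _ _ h)
  have hdp0 : dp ≠ 0 := fun h => hqd (h ▸ zero_mem _)
  have hc0 : c ≠ 0 := fun h => hnt (by simp [h])
  have ha0 : a ≠ 0 := fun h => hnt (by simp [h])
  have hb0 : b ≠ 0 := fun h => hnt (by simp [h])
  -- the map to 𝓞 L and a prime above q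
  set φ : 𝓞 Kp →+* 𝓞 L := algebraMap (𝓞 Kp) (𝓞 L) with hφ
  have hφcoe : ∀ x : 𝓞 Kp, ((φ x : 𝓞 L) : L) = ((x : Kp) : L) := by
    intro x; rfl
  have hφinj : Function.Injective φ := by
    intro x y hxy
    have := congrArg (fun z : 𝓞 L => (z : L)) hxy
    simp only [hφcoe] at this
    exact RingOfIntegers.ext (Subtype.ext this)
  obtain ⟨Q, hQp, hQc⟩ : ∃ Q : Ideal (𝓞 L), Q.IsPrime ∧ Q.comap φ = q.asIdeal := by
    obtain ⟨Q, hQp, hQc⟩ := Ideal.exists_ideal_over_prime_of_isIntegral_of_isDomain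
      (R := 𝓞 Kp) (S := 𝓞 L) q.asIdeal
      (by rw [(RingHom.injective_iff_ker_eq_bot _).mp hφinj]; exact bot_le)
    exact ⟨Q, hQp, hQc⟩
  have hmem : ∀ x : 𝓞 Kp, x ∈ q.asIdeal ↔ φ x ∈ Q := by
    intro x; rw [← hQc, Ideal.mem_comap]
  -- ζ as an algebraic integer
  have hζ0 : ζ ≠ 0 := hζ.ne_zero (by omega)
  have hζint : IsIntegral ℤ ζ := by
    refine ⟨Polynomial.X ^ r - 1, ?_, ?_⟩
    · exact Polynomial.monic_X_pow_sub_C _ (by omega)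
    · simp [hζ.pow_eq_one]
  set ζ' : 𝓞 L := ⟨ζ, hζint⟩ with hζ'def
  have hζ'r : ζ' ^ r = 1 := by
    ext; exact hζ.pow_eq_one
  have hζ' : IsPrimitiveRoot ζ' r := by
    refine ⟨hζ'r, fun l hl => hζ.dvd_of_pow_eq_one l ?_⟩
    exact congrArg (fun z : 𝓞 L => (z : L)) hl
  have hζ'unit : ∀ v : ℕ, ζ' ^ v ∉ Q := by
    intro v hv
    have h1 : (1 : 𝓞 L) ∈ Q := by
      have : ζ' ^ v * ζ' ^ (v * (r - 1)) = 1 := by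
        rw [← pow_add]
        have h' : v + v * (r - 1) = r * v := by rw [hrm, Nat.add_sub_cancel]; ring
        rw [h', pow_mul, hζ'r, one_pow]
      exact this ▸ Ideal.mul_mem_right _ _ hv
    exact hQp.ne_top (Ideal.eq_top_of_isUnit_mem _ h1 isUnit_one)
  have hrQ : ((r : ℕ) : 𝓞 L) ∉ Q := by
    intro h
    refine hqr ((hmem _).mpr ?_)
    rwa [map_natCast]
  -- (1 - ζ'^m') divides r
  have hdvd1 : ∀ m' : ℕ, 0 < m' → m' < r → (1 - ζ' ^ m') ∣ ((r : ℕ) : 𝓞 L) := by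
    intro m' h1 h2
    have hζ'' : IsPrimitiveRoot ζ' ((r - 1) + 1) := by
      rwa [Nat.sub_add_cancel (by omega)]
    have hprod := hζ''.prod_one_sub_pow_eq_order
    have : ((r : ℕ) : 𝓞 L) = ∏ k ∈ Finset.range (r - 1), (1 - ζ' ^ (k + 1)) := by
      rw [hprod]
      push_cast
      have : (r : ℕ) - 1 + 1 = r := by omega
      rw [← this]; push_cast; ring
    rw [this]
    have hmem' : m' - 1 ∈ Finset.range (r - 1) := by
      simp only [Finset.mem_range]; omega
    have := Finset.dvd_prod_of_mem (fun k => 1 - ζ' ^ (k + 1)) hmem'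
    simpa [Nat.sub_add_cancel h1] using this
  -- key divisibility: distinct powers of ζ' cannot be congruent mod Q
  have zdiff : ∀ u v : ℕ, v < u → u - v < r → ζ' ^ u - ζ' ^ v ∈ Q → False := by
    intro u v huv hvr hQm
    have hfac : ζ' ^ u - ζ' ^ v = ζ' ^ v * (ζ' ^ (u - v) - 1) := by
      rw [mul_sub, ← pow_add, mul_one]
      congr 2
      omega
    rw [hfac] at hQm
    rcases hQp.mem_or_mem hQm with h | h
    · exact hζ'unit v h
    · have h' : 1 - ζ' ^ (u - v) ∈ Q := by
        have := Q.neg_mem h; simpa using this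
      exact hrQ (Q.mem_of_dvd (hdvd1 (u - v) (by omega) hvr) h')
  -- images of a, b in 𝓞 L, and the linear factors
  set a₀ : 𝓞 L := φ a with ha₀
  set b₀ : 𝓞 L := φ b with hb₀
  set F : ℕ → 𝓞 L := fun j => a₀ + ζ' ^ j * b₀ with hF
  -- if two linear factors with distinct exponents < r lie in Q, contradiction
  have keyQ : ∀ u v : ℕ, u < r → v < r → u ≠ v → F u ∈ Q → F v ∈ Q → False := by
    intro u v hu hv huv hFu hFv
    have hsub : (ζ' ^ u - ζ' ^ v) * b₀ ∈ Q := by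
      have : (ζ' ^ u - ζ' ^ v) * b₀ = F u - F v := by rw [hF]; ring
      rw [this]; exact Q.sub_mem hFu hFv
    rcases hQp.mem_or_mem hsub with h | hbQ
    · rcases Nat.lt_or_ge v u with h' | h'
      · exact zdiff u v h' (by omega) h
      · have h'' : v ≠ u := fun hh => huv hh.symm
        have : ζ' ^ v - ζ' ^ u ∈ Q := by have := Q.neg_mem h; simpa using this
        exact zdiff v u (by omega) (by omega) this
    · -- b ∈ q, then a ∈ q, then c ∈ q, contradicting primitivity
      have hbq : b ∈ q.asIdeal := (hmem b).mpr hbQ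
      have haQ : a₀ ∈ Q := by
        have : a₀ = F u - ζ' ^ u * b₀ := by rw [hF]; ring
        rw [this]; exact Q.sub_mem hFu (Ideal.mul_mem_left _ _ hbQ)
      have haq : a ∈ q.asIdeal := (hmem a).mpr haQ
      have hcq : c ∈ q.asIdeal := by
        have h1 : dp * c ^ p ∈ q.asIdeal := by
          rw [← heq]
          exact Ideal.add_mem _ (Ideal.pow_mem_of_mem _ haq r (by omega))
            (Ideal.pow_mem_of_mem _ hbq r (by omega))
        rcases hqp.mem_or_mem h1 with h | h
        · exact absurd h hqd
        · exact hqp.mem_of_pow_mem _ h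
      have hle : Ideal.span {a, b, c} ≤ q.asIdeal := by
        rw [Ideal.span_le]
        intro x hx
        simp only [Set.mem_insert_iff, Set.mem_singleton_iff] at hx
        rcases hx with rfl | rfl | rfl
        · exact haq
        · exact hbq
        · exact hcq
      rw [hprim] at hle
      exact hqp.ne_top (top_le_iff.mp hle)
  -- the images of the `e k`
  have hcoeKp : Function.Injective (fun x : Kp => (x : L)) := Subtype.val_injective
  have hOKp : Function.Injective (fun x : 𝓞 Kp => ((x : Kp) : L)) := by
    intro x y h
    exact RingOfIntegers.ext (Subtype.ext h)
  have hek : ∀ k : ℕ, k ≤ r → φ (e k) = ζ' ^ k + ζ' ^ (r - k) := by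
    intro k hk
    apply RingOfIntegers.ext
    have h1 : ((φ (e k) : 𝓞 L) : L) = ζ ^ k + ζ⁻¹ ^ k := by rw [hφcoe, he k]
    have h2 : ζ⁻¹ ^ k = ζ ^ (r - k) := by
      rw [inv_pow]
      apply inv_eq_of_mul_eq_one_left
      rw [← pow_add]
      have : r - k + k = r := by omega
      rw [this, hζ.pow_eq_one]
    have h3 : ((ζ' ^ k + ζ' ^ (r - k) : 𝓞 L) : L) = ζ ^ k + ζ ^ (r - k) := by
      push_cast
      rfl
    rw [h1, h2, h3]
  -- the quadratic factors
  have hfke : ∀ k : ℕ, k ≤ r → φ (a ^ 2 + e k * a * b + b ^ 2) = F k * F (r - k) := by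
    intro k hk
    have h1 : ζ' ^ k * ζ' ^ (r - k) = 1 := by
      rw [← pow_add]
      have : k + (r - k) = r := by omega
      rw [this, hζ'r]
    rw [map_add, map_add, map_mul, map_mul, map_pow, map_pow, hek k hk]
    simp only [hF, ← ha₀, ← hb₀]
    ring_nf
    linear_combination (-(b₀ ^ 2)) * h1
  -- the full product over all r-th roots of unity
  have himg : Polynomial.nthRootsFinset r (1 : 𝓞 L) = (Finset.range r).image (fun j => ζ' ^ j) := by
    symm
    apply Finset.eq_of_subset_of_card_le
    · intro x hx
      simp only [Finset.mem_image, Finset.mem_range] at hx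
      obtain ⟨j, hj, rfl⟩ := hx
      rw [Polynomial.mem_nthRootsFinset (by omega : 0 < r)]
      rw [← pow_mul, mul_comm, pow_mul, hζ'r, one_pow]
    · rw [hζ'.card_nthRootsFinset]
      rw [Finset.card_image_of_injOn (fun i hi j hj h =>
        hζ'.pow_inj (Finset.mem_range.mp hi) (Finset.mem_range.mp hj) h)]
      simp
  have hprod : ∏ j ∈ Finset.range r, F j = a₀ ^ r + b₀ ^ r := by
    have h0 := hζ'.pow_add_pow_eq_prod_add_mul a₀ b₀ hodd
    rw [himg, Finset.prod_image (fun i hi j hj h =>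
      hζ'.pow_inj (Finset.mem_range.mp hi) (Finset.mem_range.mp hj) h)] at h0
    rw [← h0]
  have hsplit : Finset.range r =
      insert 0 ((Finset.Icc 1 m) ∪ (Finset.Icc (m+1) (2*m))) := by
    ext j
    simp only [Finset.mem_insert, Finset.mem_union, Finset.mem_Icc, Finset.mem_range]
    omega
  have hswap : ∏ j ∈ Finset.Icc (m+1) (2*m), F j = ∏ j ∈ Finset.Icc 1 m, F (r - j) := by
    symm
    apply Finset.prod_nbij' (fun j => r - j) (fun j => r - j)
    · intro a ha; simp only [Finset.mem_Icc] at *; omega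
    · intro a ha; simp only [Finset.mem_Icc] at *; omega
    · intro a ha; simp only [Finset.mem_Icc] at *; omega
    · intro a ha; simp only [Finset.mem_Icc] at *; omega
    · intro a ha; rfl
  have hstar : a ^ r + b ^ r =
      (a + b) * ∏ j ∈ Finset.Icc 1 m, (a ^ 2 + e j * a * b + b ^ 2) := by
    apply hφinj
    rw [map_add, map_pow, map_pow, map_mul, map_add, map_prod]
    have hrw : ∀ j ∈ Finset.Icc 1 m, φ (a ^ 2 + e j * a * b + b ^ 2) = F j * F (r - j) := by
      intro j hj
      simp only [Finset.mem_Icc] at hj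
      exact hfke j (by omega)
    rw [Finset.prod_congr rfl hrw, ← hprod, hsplit]
    rw [Finset.prod_insert (by simp only [Finset.mem_union, Finset.mem_Icc]; omega)]
    rw [Finset.prod_union (by
      rw [Finset.disjoint_left]
      intro x hx hx'
      simp only [Finset.mem_Icc] at hx hx'
      omega)]
    rw [hswap, Finset.prod_mul_distrib]
    have hF0 : F 0 = a₀ + b₀ := by simp [hF]
    rw [hF0]
  have hF0 : F 0 = a₀ + b₀ := by simp [hF]
  -- differences of the e's are not in q
  have ediff : ∀ i j : ℕ, i < j → j ≤ m → (e j - e i) ∉ q.asIdeal := by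
    intro i j hij hjm hq'
    have hQm : φ (e j) - φ (e i) ∈ Q := by
      rw [← map_sub]; exact (hmem _).mp hq'
    rw [hek i (by omega), hek j (by omega)] at hQm
    have hfac : (ζ' ^ j + ζ' ^ (r - j)) - (ζ' ^ i + ζ' ^ (r - i)) =
        (ζ' ^ j - ζ' ^ i) * (1 - ζ' ^ (r - i - j)) := by
      have e1 : ζ' ^ j * ζ' ^ (r - i - j) = ζ' ^ (r - i) := by
        rw [← pow_add]; congr 1; omega
      have e2 : ζ' ^ i * ζ' ^ (r - i - j) = ζ' ^ (r - j) := by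
        rw [← pow_add]; congr 1; omega
      linear_combination e1 - e2
    rw [hfac] at hQm
    rcases hQp.mem_or_mem hQm with h | h
    · exact zdiff j i hij (by omega) h
    · have h' : ζ' ^ (r - i - j) - ζ' ^ 0 ∈ Q := by
        have := Q.neg_mem h; simpa using this
      exact zdiff (r - i - j) 0 (by omega) (by omega) h'
  -- the quadratic forms
  set f : ℕ → 𝓞 Kp := fun k => a ^ 2 + e k * a * b + b ^ 2 with hfdef
  have hfQ : ∀ k : ℕ, k ≤ m → f k ∈ q.asIdeal →
      ∃ u, u < r ∧ (u = k ∨ (1 ≤ k ∧ u = r - k)) ∧ F u ∈ Q := by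
    intro k hk hfq
    have hQm : F k * F (r - k) ∈ Q := by
      rw [← hfke k (by omega)]; exact (hmem _).mp hfq
    rcases hQp.mem_or_mem hQm with h | h
    · exact ⟨k, by omega, Or.inl rfl, h⟩
    · by_cases hk0 : k = 0
      · subst hk0
        have hFr : F (r - 0) = F 0 := by simp [hF, hζ'r]
        rw [hFr] at h
        exact ⟨0, by omega, Or.inl rfl, h⟩
      · exact ⟨r - k, by omega, Or.inr ⟨by omega, rfl⟩, h⟩
  -- two distinct quadratic forms cannot both lie in q
  have hpair : ∀ i j : ℕ, i < j → j ≤ m → f i ∈ q.asIdeal → f j ∈ q.asIdeal → False := by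
    intro i j hij hjm hfi hfj
    obtain ⟨u, hur, hu, hFu⟩ := hfQ i (by omega) hfi
    obtain ⟨v, hvr, hv, hFv⟩ := hfQ j hjm hfj
    exact keyQ u v hur hvr (by omega) hFu hFv
  -- generic valuation computation
  have hval : ∀ g w : 𝓞 Kp, g * w = dp * c ^ p → w ∉ q.asIdeal →
      vP q ((g : Kp)) = p * vP q ((c : Kp)) := by
    intro g w hgw hwq
    have hrhs : dp * c ^ p ≠ 0 := mul_ne_zero hdp0 (pow_ne_zero _ hc0)
    have hg0 : g ≠ 0 := fun h => hrhs (by rw [← hgw, h, zero_mul])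
    have hw0 : w ≠ 0 := fun h => hrhs (by rw [← hgw, h, mul_zero])
    have hgK : (g : Kp) ≠ 0 := by
      simpa [ne_eq, RingOfIntegers.coe_eq_zero_iff] using hg0
    have hwK : (w : Kp) ≠ 0 := by
      simpa [ne_eq, RingOfIntegers.coe_eq_zero_iff] using hw0
    have hdK : (dp : Kp) ≠ 0 := by
      simpa [ne_eq, RingOfIntegers.coe_eq_zero_iff] using hdp0
    have hcK : (c : Kp) ≠ 0 := by
      simpa [ne_eq, RingOfIntegers.coe_eq_zero_iff] using hc0
    have hcast : (g : Kp) * (w : Kp) = (dp : Kp) * ((c : Kp)) ^ p := by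
      have := congrArg (fun z : 𝓞 Kp => (z : Kp)) hgw
      push_cast at this
      exact this
    have h1 : vP q ((g : Kp)) + vP q ((w : Kp)) = vP q ((dp : Kp)) + vP q (((c : Kp)) ^ p) := by
      rw [← vP_mul q hgK hwK, ← vP_mul q hdK (pow_ne_zero _ hcK), hcast]
    rw [vP_eq_zero_of_not_mem q hwq, vP_eq_zero_of_not_mem q hqd, vP_pow q hcK] at h1
    omega
  -- p divides the valuation of each quadratic form
  have hdvdf : ∀ k : ℕ, k ≤ m → (p : ℤ) ∣ vP q ((f k : Kp)) := by
    intro k hk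
    by_cases hfq : f k ∈ q.asIdeal
    swap
    · rw [vP_eq_zero_of_not_mem q hfq]; exact dvd_zero _
    obtain ⟨u, hur, hu, hFu⟩ := hfQ k hk hfq
    by_cases hk0 : k = 0
    · subst hk0
      have he0 : e 0 = 2 := by
        apply hOKp
        show ((e 0 : Kp) : L) = (((2 : 𝓞 Kp) : Kp) : L)
        rw [he 0]
        have h2 : (((2 : 𝓞 Kp) : Kp) : L) = 2 := by norm_cast
        rw [h2]
        norm_num
      have hf0 : f 0 = (a + b) ^ 2 := by
        simp only [hfdef, he0]; ring
      have habq : (a + b) ∈ q.asIdeal := by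
        have h2 : (a + b) ^ 2 ∈ q.asIdeal := hf0 ▸ hfq
        exact hqp.mem_of_pow_mem _ h2
      have hmulw : (a + b) * (∏ j ∈ Finset.Icc 1 m, f j) = dp * c ^ p := by
        rw [← heq, hstar]
      have hwq : (∏ j ∈ Finset.Icc 1 m, f j) ∉ q.asIdeal := by
        intro hwq
        have hQw : ∏ j ∈ Finset.Icc 1 m, φ (f j) ∈ Q := by
          rw [← map_prod]; exact (hmem _).mp hwq
        obtain ⟨j, hj, hwj⟩ := (Ideal.IsPrime.prod_mem_iff (hp := hQp)).mp hQw
        simp only [Finset.mem_Icc] at hj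
        rw [hfke j (by omega)] at hwj
        have hu0 : u = 0 := by omega
        subst hu0
        rcases hQp.mem_or_mem hwj with h | h
        · exact keyQ 0 j (by omega) (by omega) (by omega) hFu h
        · exact keyQ 0 (r - j) (by omega) (by omega) (by omega) hFu h
      have hvab := hval (a + b) _ hmulw hwq
      have hcastf : ((f 0 : 𝓞 Kp) : Kp) = (((a + b : 𝓞 Kp) : Kp)) ^ 2 := by
        rw [hf0]; push_cast; ring
      have habK : ((a + b : 𝓞 Kp) : Kp) ≠ 0 := by
        have : (a + b) ≠ 0 := by
          intro h
          have := hmulw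
          rw [h, zero_mul] at this
          exact (mul_ne_zero hdp0 (pow_ne_zero _ hc0)) this.symm
        rw [ne_eq, RingOfIntegers.coe_eq_zero_iff]
        exact this
      rw [hcastf, vP_pow q habK, hvab]
      exact ⟨2 * vP q ((c : Kp)), by ring⟩
    · -- k ≥ 1
      have hkIcc : k ∈ Finset.Icc 1 m := by simp only [Finset.mem_Icc]; omega
      have hsplit2 : f k * ((a + b) * ∏ j ∈ (Finset.Icc 1 m).erase k, f j) = dp * c ^ p := by
        rw [← heq, hstar, ← Finset.mul_prod_erase _ _ hkIcc]; ring
      have hwq : ((a + b) * ∏ j ∈ (Finset.Icc 1 m).erase k, f j) ∉ q.asIdeal := by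
        intro hwq
        rcases hqp.mem_or_mem hwq with h | h
        · -- a + b ∈ q
          have hQab : F 0 ∈ Q := by
            rw [hF0]
            have : φ (a + b) ∈ Q := (hmem _).mp h
            rwa [map_add] at this
          exact keyQ u 0 hur (by omega) (by omega) hFu hQab
        · have hQw : ∏ j ∈ (Finset.Icc 1 m).erase k, φ (f j) ∈ Q := by
            rw [← map_prod]; exact (hmem _).mp h
          obtain ⟨j, hj, hwj⟩ := (Ideal.IsPrime.prod_mem_iff (hp := hQp)).mp hQw
          have hj' : j ∈ Finset.Icc 1 m ∧ j ≠ k := by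
            constructor
            · exact Finset.mem_of_mem_erase hj
            · exact Finset.ne_of_mem_erase hj
          have hjm : 1 ≤ j ∧ j ≤ m := by
            have := hj'.1; simp only [Finset.mem_Icc] at this; exact this
          rw [hfke j (by omega)] at hwj
          rcases hQp.mem_or_mem hwj with h' | h'
          · exact keyQ u j hur (by omega) (by omega) hFu h'
          · exact keyQ u (r - j) hur (by omega) (by omega) hFu h'
      have := hval (f k) _ hsplit2 hwq
      rw [this]
      exact ⟨vP q ((c : Kp)), rfl⟩
  -- helper for coercion nonvanishing
  have hKne : ∀ x : 𝓞 Kp, x ≠ 0 → (x : Kp) ≠ 0 := by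
    intro x hx
    rw [ne_eq, RingOfIntegers.coe_eq_zero_iff]
    exact hx
  have hA2 : A = (e k₃ - e k₂) * f k₁ := by rw [hfdef]; exact hA
  have hB2 : B = (e k₁ - e k₃) * f k₂ := by rw [hfdef]; exact hB
  have hC2 : C = (e k₂ - e k₁) * f k₃ := by rw [hfdef]; exact hC
  -- main case split on Δ = 0
  by_cases hΔ0 : Δ = 0
  · have hz : (Δ : Kp) = (0 : Kp) := by rw [hΔ0]; norm_cast
    rw [hz, vP_zero]
    exact ⟨dvd_zero _, fun h => absurd h (lt_irrefl 0)⟩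
  -- nonzero quantities
  have hABC : A * B * C ≠ 0 := by
    intro h
    exact hΔ0 (by rw [hΔ, h]; ring)
  have hA0 : A ≠ 0 := fun h => hABC (by rw [h]; ring)
  have hB0 : B ≠ 0 := fun h => hABC (by rw [h]; ring)
  have hC0 : C ≠ 0 := fun h => hABC (by rw [h]; ring)
  have hα0 : (e k₃ - e k₂) ≠ 0 := fun h => hA0 (by rw [hA2, h]; ring)
  have hβ0 : (e k₁ - e k₃) ≠ 0 := fun h => hB0 (by rw [hB2, h]; ring)
  have hγ0 : (e k₂ - e k₁) ≠ 0 := fun h => hC0 (by rw [hC2, h]; ring)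
  have hf10 : f k₁ ≠ 0 := fun h => hA0 (by rw [hA2, h]; ring)
  have hf20 : f k₂ ≠ 0 := fun h => hB0 (by rw [hB2, h]; ring)
  have hf30 : f k₃ ≠ 0 := fun h => hC0 (by rw [hC2, h]; ring)
  -- not-in-q facts for the coefficients
  have hαq : (e k₃ - e k₂) ∉ q.asIdeal := ediff k₂ k₃ h23 h3
  have hβq' : (e k₃ - e k₁) ∉ q.asIdeal := ediff k₁ k₃ (lt_trans h12 h23) h3
  have hβq : (e k₁ - e k₃) ∉ q.asIdeal := by
    intro h
    exact hβq' (by simpa [neg_sub] using q.asIdeal.neg_mem h)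
  have hγq : (e k₂ - e k₁) ∉ q.asIdeal := ediff k₁ k₂ h12 (by omega)
  -- valuations of A, B, C
  have hvABC : ∀ (i : ℕ) (α X : 𝓞 Kp), i ≤ m → X = α * f i → α ≠ 0 → f i ≠ 0 →
      α ∉ q.asIdeal → (p : ℤ) ∣ vP q ((X : Kp)) := by
    intro i α X him hX hα hfi hαq'
    have hcast : (X : Kp) = ((α : Kp)) * ((f i : Kp)) := by
      rw [hX]; push_cast; ring
    rw [hcast, vP_mul q (hKne _ hα) (hKne _ hfi), vP_eq_zero_of_not_mem q hαq', zero_add]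
    exact hdvdf i him
  have hdA : (p : ℤ) ∣ vP q ((A : Kp)) := hvABC k₁ _ _ (by omega) hA2 hα0 hf10 hαq
  have hdB : (p : ℤ) ∣ vP q ((B : Kp)) := hvABC k₂ _ _ (by omega) hB2 hβ0 hf20 hβq
  have hdC : (p : ℤ) ∣ vP q ((C : Kp)) := hvABC k₃ _ _ h3 hC2 hγ0 hf30 hγq
  have hAK : (A : Kp) ≠ 0 := hKne _ hA0
  have hBK : (B : Kp) ≠ 0 := hKne _ hB0
  have hCK : (C : Kp) ≠ 0 := hKne _ hC0
  have h2K : ((2 : 𝓞 Kp) : Kp) ≠ 0 := hKne _ two_ne_zero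
  have hvΔ : vP q ((Δ : Kp)) = 4 * vP q (((2 : 𝓞 Kp) : Kp)) +
      2 * (vP q ((A : Kp)) + vP q ((B : Kp)) + vP q ((C : Kp))) := by
    have hcast : (Δ : Kp) = (((2 : 𝓞 Kp) : Kp)) ^ 4 *
        (((A : Kp)) * ((B : Kp)) * ((C : Kp))) ^ 2 := by
      rw [hΔ]; push_cast; ring
    rw [hcast, vP_mul q (pow_ne_zero _ h2K)
        (pow_ne_zero _ (mul_ne_zero (mul_ne_zero hAK hBK) hCK)),
      vP_pow q h2K, vP_pow q (mul_ne_zero (mul_ne_zero hAK hBK) hCK),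
      vP_mul q (mul_ne_zero hAK hBK) hCK, vP_mul q hAK hBK]
    push_cast
    ring
  have hv2 : vP q (((2 : 𝓞 Kp) : Kp)) = 0 := vP_eq_zero_of_not_mem q hq2
  constructor
  · -- p divides vP Δ
    rw [hvΔ, hv2]
    have : (p : ℤ) ∣ vP q ((A : Kp)) + vP q ((B : Kp)) + vP q ((C : Kp)) :=
      (hdA.add hdB).add hdC
    exact Dvd.dvd.add (by simp) (this.mul_left 2)
  · -- second part
    intro hpos
    have hΔq : Δ ∈ q.asIdeal := by
      by_contra hno
      rw [vP_eq_zero_of_not_mem q hno] at hpos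
      exact lt_irrefl 0 hpos
    have h16 : (2 : 𝓞 Kp) ^ 4 ∉ q.asIdeal := fun h => hq2 (hqp.mem_of_pow_mem _ h)
    have hABCq : A ∈ q.asIdeal ∨ B ∈ q.asIdeal ∨ C ∈ q.asIdeal := by
      rw [hΔ] at hΔq
      rcases hqp.mem_or_mem hΔq with h | h
      · exact absurd h h16
      · have h' := hqp.mem_of_pow_mem _ h
        rcases hqp.mem_or_mem h' with h'' | h''
        · rcases hqp.mem_or_mem h'' with h3' | h3'
          · exact Or.inl h3'
          · exact Or.inr (Or.inl h3')
        · exact Or.inr (Or.inr h'')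
    have hfmem : ∀ (i : ℕ) (α X : 𝓞 Kp), X = α * f i → α ∉ q.asIdeal →
        X ∈ q.asIdeal → f i ∈ q.asIdeal := by
      intro i α X hX hα hXq
      rw [hX] at hXq
      rcases hqp.mem_or_mem hXq with h | h
      · exact absurd h hα
      · exact h
    have hc₄q : c₄ ∉ q.asIdeal := by
      have key : ∀ X Y Z : 𝓞 Kp, X ∈ q.asIdeal → Y ∉ q.asIdeal → Z ∉ q.asIdeal →
          X * Y + Y * Z + Z * X ∈ q.asIdeal → False := by
        intro X Y Z hX hY hZ hsum
        have h1 : X * Y + Z * X ∈ q.asIdeal :=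
          Ideal.add_mem _ (Ideal.mul_mem_right _ _ hX) (Ideal.mul_mem_left _ _ hX)
        have h2 := q.asIdeal.sub_mem hsum h1
        have h3' : X * Y + Y * Z + Z * X - (X * Y + Z * X) = Y * Z := by ring
        rw [h3'] at h2
        rcases hqp.mem_or_mem h2 with h | h
        · exact hY h
        · exact hZ h
      intro hc4q
      have hsum : A * B + B * C + C * A ∈ q.asIdeal := by
        rw [hc₄] at hc4q
        rcases hqp.mem_or_mem hc4q with h | h
        · exact absurd h h16
        · exact h
      rcases hABCq with h | h | h
      · have hf1 : f k₁ ∈ q.asIdeal := hfmem k₁ _ _ hA2 hαq h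
        have hBq : B ∉ q.asIdeal := fun hB' =>
          hpair k₁ k₂ h12 (by omega) hf1 (hfmem k₂ _ _ hB2 hβq hB')
        have hCq : C ∉ q.asIdeal := fun hC' =>
          hpair k₁ k₃ (by omega) h3 hf1 (hfmem k₃ _ _ hC2 hγq hC')
        exact key A B C h hBq hCq hsum
      · have hf2 : f k₂ ∈ q.asIdeal := hfmem k₂ _ _ hB2 hβq h
        have hAq : A ∉ q.asIdeal := fun h' =>
          hpair k₁ k₂ h12 (by omega) (hfmem k₁ _ _ hA2 hαq h') hf2
        have hCq : C ∉ q.asIdeal := fun h' =>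
          hpair k₂ k₃ h23 h3 hf2 (hfmem k₃ _ _ hC2 hγq h')
        refine key B C A h hCq hAq ?_
        have hrw : B * C + C * A + A * B = A * B + B * C + C * A := by ring
        rwa [hrw]
      · have hf3 : f k₃ ∈ q.asIdeal := hfmem k₃ _ _ hC2 hγq h
        have hAq : A ∉ q.asIdeal := fun h' =>
          hpair k₁ k₃ (by omega) h3 (hfmem k₁ _ _ hA2 hαq h') hf3
        have hBq : B ∉ q.asIdeal := fun h' =>
          hpair k₂ k₃ h23 h3 (hfmem k₂ _ _ hB2 hβq h') hf3
        refine key C A B h hAq hBq ?_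
        have hrw : C * A + A * B + B * C = A * B + B * C + C * A := by ring
        rwa [hrw]
    exact vP_eq_zero_of_not_mem q hc₄q
end

section
/- Let F be a number field and let P be a prime ideal of O_F lying above 2. Let λ, μ ∈ F be nonzero elements with λ + μ = 1 and λ·μ ≠ 1, and suppose max{|v_P(λ)|, |v_P(μ)|} ≤ 4·v_P(2). Then v_P(2⁸·(1 − λ·μ)³ / (λ·μ)²) ≥ 0. -/
open IsDedekindDomain NumberField

section aux
variable {F : Type*} [Field F] [NumberField F] (P : HeightOneSpectrum (𝓞 F))

lemma vP_spec {x : F} (hx : x ≠ 0) :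
    P.valuation F x = WithZero.coe (Multiplicative.ofAdd (-vP P x)) := by
  simp only [vP]
  rw [dif_neg hx, neg_neg, ofAdd_toAdd, WithZero.coe_unzero]

lemma vP_neg {x : F} (hx : x ≠ 0) : vP P (-x) = vP P x := by
  have h := (P.valuation F).map_neg x
  rw [vP_spec P (neg_ne_zero.mpr hx), vP_spec P hx, WithZero.coe_inj] at h
  have := Multiplicative.ofAdd.injective h
  omega

lemma vP_add_min {x y : F} (hx : x ≠ 0) (hy : y ≠ 0) (hxy : x + y ≠ 0) :
    min (vP P x) (vP P y) ≤ vP P (x + y) := by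
  have h := (P.valuation F).map_add x y
  rw [vP_spec P hxy, vP_spec P hx, vP_spec P hy] at h
  rcases le_max_iff.mp h with h | h <;>
  · have := Multiplicative.ofAdd_le.mp (WithZero.coe_le_coe.mp h)
    omega

lemma vP_inv {x : F} (hx : x ≠ 0) : vP P x⁻¹ = - vP P x := by
  have h := vP_mul P hx (inv_ne_zero hx)
  rw [mul_inv_cancel₀ hx, vP_one] at h
  omega

end aux

/-- the valuation computation from the proof of Theorem 2.2 of the paper,
showing that the `j`-invariant `2⁸·(1 − λμ)³/(λμ)²` of the Legendre curve, where
`λ + μ = 1`, is integral at a prime `P` above `2`. -/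
theorem legendre_jinvariant_integral_at_2
    (F : Type*) [Field F] [NumberField F]
    (P : HeightOneSpectrum (𝓞 F)) (hP2 : (2 : 𝓞 F) ∈ P.asIdeal)
    (lam mu : F) (hlam0 : lam ≠ 0) (hmu0 : mu ≠ 0)
    (hsum : lam + mu = 1) (hne1 : lam * mu ≠ 1)
    (hbound : max |vP P lam| |vP P mu| ≤ 4 * vP P (2 : F)) :
    0 ≤ vP P (2 ^ 8 * (1 - lam * mu) ^ 3 / (lam * mu) ^ 2) := by
  have h2 : (2:F) ≠ 0 := two_ne_zero
  have hm0 : lam * mu ≠ 0 := mul_ne_zero hlam0 hmu0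
  have hd0 : (1 : F) - lam * mu ≠ 0 := sub_ne_zero.mpr (Ne.symm hne1)
  set e := vP P (2:F) with he
  set a := vP P lam with ha
  set b := vP P mu with hb
  set c := vP P ((1:F) - lam * mu) with hc
  have hexpr : vP P (2 ^ 8 * (1 - lam * mu) ^ 3 / (lam * mu) ^ 2)
      = 8 * e + 3 * c - 2 * (a + b) := by
    rw [div_eq_mul_inv,
      vP_mul P (mul_ne_zero (pow_ne_zero _ h2) (pow_ne_zero _ hd0))
        (inv_ne_zero (pow_ne_zero _ hm0)),
      vP_mul P (pow_ne_zero _ h2) (pow_ne_zero _ hd0),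
      vP_inv P (pow_ne_zero _ hm0), vP_pow P h2, vP_pow P hd0, vP_pow P hm0,
      vP_mul P hlam0 hmu0]
    push_cast; ring
  rw [hexpr]
  have ha4 : |a| ≤ 4*e := le_trans (le_max_left _ _) hbound
  have hb4 : |b| ≤ 4*e := le_trans (le_max_right _ _) hbound
  rw [abs_le] at ha4 hb4
  have hmin : min a b ≤ 0 := by
    have h := vP_add_min P hlam0 hmu0 (by rw [hsum]; exact one_ne_zero)
    rw [hsum, vP_one] at h
    exact h
  have e1 : (1:F) + -mu = lam := by linear_combination -hsum
  have e2 : (1:F) + -lam = mu := by linear_combination -hsum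
  have e3 : (1:F) + -(lam * mu) = 1 - lam * mu := by ring
  have hii : min 0 b ≤ a := by
    have h := vP_add_min P one_ne_zero (neg_ne_zero.mpr hmu0) (by rw [e1]; exact hlam0)
    rw [e1, vP_one, vP_neg P hmu0] at h
    exact h
  have hiii : min 0 a ≤ b := by
    have h := vP_add_min P one_ne_zero (neg_ne_zero.mpr hlam0) (by rw [e2]; exact hmu0)
    rw [e2, vP_one, vP_neg P hlam0] at h
    exact h
  have hcmin : min 0 (a + b) ≤ c := by
    have h := vP_add_min P one_ne_zero (neg_ne_zero.mpr hm0) (by rw [e3]; exact hd0)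
    rw [e3, vP_one, vP_neg P hm0, vP_mul P hlam0 hmu0] at h
    exact h
  omega
end
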